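/- arXiv:1301.3681 — 2 statements merged into one kernel-verified Lean document; each statement's English description precedes it below -/
import Mathlib

section
/- Write A = A₁ + A₂, where A₁ is the upper triangular matrix with (A₁) i i = 1 for all i, (A₁) i j = A i j for i < j and (A₁) i j = 0 for i > j, and A₂ = A − A₁ (so A₂ is lower triangular with 1's on the diagonal). Then A₁ is invertible over ℤ, and the matrix of the Coxeter element w = s 1 ∘ s 2 ∘ ⋯ ∘ s n in the standard basis equals −A₁⁻¹·A₂ = Iₙ − A₁⁻¹·A. -/
open Matrix Filter Pointwise

namespace KacMoodyPaper

variable {n : ℕ}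

/-- `A` is a generalized Cartan matrix. -/
def IsGCM (A : Matrix (Fin n) (Fin n) ℤ) : Prop :=
  (∀ i, A i i = 2) ∧ (∀ i j, i ≠ j → A i j ≤ 0) ∧ (∀ i j, A i j = 0 ↔ A j i = 0)

/-- The simple reflection `s i` as a linear map: `s i v = v - (A *ᵥ v) i • e i`. -/
def sMap (A : Matrix (Fin n) (Fin n) ℤ) (i : Fin n) : (Fin n → ℤ) →ₗ[ℤ] (Fin n → ℤ) where
  toFun v := v - (A.mulVec v i) • Pi.single i 1
  map_add' x y := by
    simp only [Matrix.mulVec_add, Pi.add_apply, add_smul]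
    abel
  map_smul' c x := by
    simp only [Matrix.mulVec_smul, Pi.smul_apply, smul_eq_mul, RingHom.id_apply, smul_sub,
      smul_smul]

theorem sMap_involutive (A : Matrix (Fin n) (Fin n) ℤ) (i : Fin n) (h2 : A i i = 2)
    (v : Fin n → ℤ) : sMap A i (sMap A i v) = v := by
  have hAe : A.mulVec (Pi.single i 1) i = A i i := by
    simp [Matrix.mulVec_single]
  simp only [sMap, LinearMap.coe_mk, AddHom.coe_mk, Matrix.mulVec_sub, Matrix.mulVec_smul,
    Pi.sub_apply, Pi.smul_apply, hAe, h2, smul_eq_mul]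
  ring_nf

/-- The simple reflection `s i` as a `ℤ`-linear automorphism of `ℤ^n`
(determined by `s i (e j) = e j - A i j • e i`). -/
def s (A : Matrix (Fin n) (Fin n) ℤ) (h2 : ∀ i, A i i = 2) (i : Fin n) :
    (Fin n → ℤ) ≃ₗ[ℤ] (Fin n → ℤ) :=
  LinearEquiv.ofLinear (sMap A i) (sMap A i)
    (LinearMap.ext fun v => sMap_involutive A i (h2 i) v)
    (LinearMap.ext fun v => sMap_involutive A i (h2 i) v)

/-- The Coxeter element `w = s 1 ∘ s 2 ∘ ⋯ ∘ s n` (applying `s n` first). -/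
def cox (A : Matrix (Fin n) (Fin n) ℤ) (h2 : ∀ i, A i i = 2) :
    (Fin n → ℤ) ≃ₗ[ℤ] (Fin n → ℤ) :=
  (List.ofFn (fun i : Fin n => s A h2 i)).prod

/-- The Weyl group: the subgroup of `GL(n, ℤ)` generated by the simple reflections. -/
def weyl (A : Matrix (Fin n) (Fin n) ℤ) (h2 : ∀ i, A i i = 2) :
    Subgroup ((Fin n → ℤ) ≃ₗ[ℤ] (Fin n → ℤ)) :=
  Subgroup.closure (Set.range (s A h2))

/-- The word length of `ω` with respect to the generators `s 1, …, s n`. -/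
noncomputable def len (A : Matrix (Fin n) (Fin n) ℤ) (h2 : ∀ i, A i i = 2)
    (ω : (Fin n → ℤ) ≃ₗ[ℤ] (Fin n → ℤ)) : ℕ :=
  sInf {k | ∃ f : Fin k → Fin n, ω = (List.ofFn (fun j => s A h2 (f j))).prod}

/-- `v ∈ ℤ^n` is positive: nonzero with all coordinates `≥ 0`. -/
def IsPos (v : Fin n → ℤ) : Prop := v ≠ 0 ∧ ∀ i, 0 ≤ v i

/-- The height of a vector: the sum of its coordinates. -/
def ht (v : Fin n → ℤ) : ℤ := ∑ i, v i

/-- The graph `Γ` on `{1, …, n}` with an edge between `i ≠ j` iff `A i j ≠ 0`. -/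
def gcmGraph (A : Matrix (Fin n) (Fin n) ℤ) (hsym : ∀ i j, A i j = 0 ↔ A j i = 0) :
    SimpleGraph (Fin n) where
  Adj i j := i ≠ j ∧ A i j ≠ 0
  symm := by
    constructor
    rintro i j ⟨hij, h⟩
    exact ⟨hij.symm, fun h0 => h ((hsym i j).mpr h0)⟩
  loopless := by constructor; rintro i ⟨h, -⟩; exact h rfl

/-- `A` is indecomposable: the graph `Γ` is connected. -/
def Indecomposable (A : Matrix (Fin n) (Fin n) ℤ) (hsym : ∀ i j, A i j = 0 ↔ A j i = 0) :
    Prop :=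
  (gcmGraph A hsym).Connected

/-- `A` is of indefinite type: there is `u > 0` (componentwise) with `A·u < 0` componentwise. -/
def IndefiniteType (A : Matrix (Fin n) (Fin n) ℤ) : Prop :=
  ∃ u : Fin n → ℤ, (∀ i, 0 < u i) ∧ ∀ i, (A.mulVec u) i < 0

/-- The fundamental set `K`: positive vectors with connected support and `A·v ≤ 0`. -/
def fundK (A : Matrix (Fin n) (Fin n) ℤ) (hsym : ∀ i j, A i j = 0 ↔ A j i = 0) :
    Set (Fin n → ℤ) :=
  {v | IsPos v ∧ ((gcmGraph A hsym).induce {i | v i ≠ 0}).Connected ∧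
    ∀ i, (A.mulVec v) i ≤ 0}

/-- The real roots: the `W`-orbits of the standard basis vectors. -/
def realRoots (A : Matrix (Fin n) (Fin n) ℤ) (h2 : ∀ i, A i i = 2) : Set (Fin n → ℤ) :=
  {v | ∃ g ∈ weyl A h2, ∃ i : Fin n, v = g (Pi.single i 1)}

/-- The positive imaginary roots: the `W`-orbit of the fundamental set `K`. -/
def posImRoots (A : Matrix (Fin n) (Fin n) ℤ) (h2 : ∀ i, A i i = 2)
    (hsym : ∀ i j, A i j = 0 ↔ A j i = 0) : Set (Fin n → ℤ) :=
  {v | ∃ g ∈ weyl A h2, ∃ k ∈ fundK A hsym, v = g k}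

/-- The set of roots `Δ`. -/
def roots (A : Matrix (Fin n) (Fin n) ℤ) (h2 : ∀ i, A i i = 2)
    (hsym : ∀ i j, A i j = 0 ↔ A j i = 0) : Set (Fin n → ℤ) :=
  realRoots A h2 ∪ posImRoots A h2 hsym ∪ (-(posImRoots A h2 hsym))

/-- The set of positive roots `Δ₊`. -/
def posRoots (A : Matrix (Fin n) (Fin n) ℤ) (h2 : ∀ i, A i i = 2)
    (hsym : ∀ i j, A i j = 0 ↔ A j i = 0) : Set (Fin n → ℤ) :=
  {v ∈ roots A h2 hsym | IsPos v}

/-- The set of negative roots `Δ₋ = -Δ₊`. -/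
def negRoots (A : Matrix (Fin n) (Fin n) ℤ) (h2 : ∀ i, A i i = 2)
    (hsym : ∀ i j, A i j = 0 ↔ A j i = 0) : Set (Fin n → ℤ) :=
  -(posRoots A h2 hsym)


lemma toMatrix'_sMap (A : Matrix (Fin n) (Fin n) ℤ) (i : Fin n) :
    LinearMap.toMatrix' (sMap A i) = 1 - Matrix.single i i 1 * A := by
  ext k j
  simp only [LinearMap.toMatrix'_apply, sMap, LinearMap.coe_mk, AddHom.coe_mk,
    Pi.sub_apply, Pi.smul_apply, smul_eq_mul, Matrix.sub_apply, Matrix.one_apply]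
  have h1 : (fun j' => if j' = j then (1:ℤ) else 0) = Pi.single j 1 := by
    ext j'; simp [Pi.single_apply]
  rw [Matrix.mulVec_single]
  rcases eq_or_ne k i with rfl | hk
  · simp [Pi.single_apply, eq_comm, mul_comm]
  · simp [Pi.single_apply, hk, Ne.symm hk, eq_comm]

lemma toMatrix'_listProd (A : Matrix (Fin n) (Fin n) ℤ) (h2 : ∀ i, A i i = 2)
    (l : List (Fin n)) :
    LinearMap.toMatrix' ((l.map (s A h2)).prod).toLinearMap
      = (l.map (fun i => (1 : Matrix (Fin n) (Fin n) ℤ) - Matrix.single i i 1 * A)).prod := by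
  induction l with
  | nil => simp
  | cons a t ih =>
    simp only [List.map_cons, List.prod_cons]
    have : ((s A h2 a) * (t.map (s A h2)).prod).toLinearMap
        = (s A h2 a).toLinearMap ∘ₗ ((t.map (s A h2)).prod).toLinearMap := rfl
    rw [this, LinearMap.toMatrix'_comp, ih, ← toMatrix'_sMap A a]
    rfl

lemma key_partial (A A₁ : Matrix (Fin n) (Fin n) ℤ)
    (hA₁ : ∀ i j, A₁ i j = if i = j then 1 else if i < j then A i j else 0)
    (m : ℕ) (hm : m ≤ n) :
    A₁ * (((List.finRange n).take m).map
        (fun i => (1 : Matrix (Fin n) (Fin n) ℤ) - Matrix.single i i 1 * A)).prod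
      = A₁ - Matrix.diagonal (fun k : Fin n => if (k : ℕ) < m then (1:ℤ) else 0) * A := by
  induction m with
  | zero =>
    have h0 : (fun k : Fin n => if (k : ℕ) < 0 then (1:ℤ) else 0) = 0 := by
      ext k; simp
    simp [h0]
  | succ m ih =>
    have hmn : m < n := hm
    have htake : (List.finRange n).take (m+1) = (List.finRange n).take m ++ [⟨m, hmn⟩] := by
      rw [List.take_succ]
      have hm' : m < (List.finRange n).length := by simpa using hmn
      rw [List.getElem?_eq_getElem hm']
      simp [List.getElem_finRange]
    set i : Fin n := ⟨m, hmn⟩ with hi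
    set D : Matrix (Fin n) (Fin n) ℤ :=
      Matrix.diagonal (fun k : Fin n => if (k : ℕ) < m then (1:ℤ) else 0) with hD
    rw [htake, List.map_append, List.prod_append, List.map_singleton, List.prod_singleton,
      ← mul_assoc, ih (le_of_lt hmn)]
    have hDA : ∀ k j : Fin n, (D * A) k j = if (k : ℕ) < m then A k j else 0 := by
      intro k j
      rw [hD, Matrix.diagonal_mul]
      simp [ite_mul]
    have habs : (A₁ - D * A) * Matrix.single i i 1 = Matrix.single i i 1 := by
      ext k j
      rcases eq_or_ne j i with rfl | hj
      · rw [Matrix.mul_single_apply_same, Matrix.sub_apply, hDA, mul_one]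
        rcases lt_trichotomy (k : ℕ) m with hk | hk | hk
        · have hki : k < i := hk
          have hkne : k ≠ i := Fin.ne_of_lt hki
          simp [hA₁, hkne, hki, hk, Matrix.single_apply_of_row_ne (Ne.symm hkne)]
        · have hki : k = i := Fin.ext (by simpa using hk)
          rw [hki]
          have him : ¬ ((i : Fin n) : ℕ) < m := by simp [hi]
          simp [hA₁, him]
        · have hki : i < k := hk
          have hkne : k ≠ i := Fin.ne_of_gt hki
          simp [hA₁, hkne, not_lt_of_gt hki, not_lt_of_gt hk,
            Matrix.single_apply_of_row_ne (Ne.symm hkne)]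
      · rw [Matrix.mul_single_apply_of_ne _ _ _ _ _ hj]
        simp [Matrix.single, Ne.symm hj]
    have hDsum : D + Matrix.single i i 1
        = Matrix.diagonal (fun k : Fin n => if (k : ℕ) < m + 1 then (1:ℤ) else 0) := by
      ext k j
      rcases eq_or_ne k j with rfl | hkj
      · rcases eq_or_ne k i with rfl | hki
        · have him : ¬ ((i : Fin n) : ℕ) < m := by simp [hi]
          have him2 : ((i : Fin n) : ℕ) < m + 1 := by simp [hi]
          simp [hD, Matrix.diagonal_apply_eq, him, him2, Nat.le_of_lt_succ him2]
        · have h1 : (k : ℕ) ≠ m := fun h => hki (Fin.ext (by simpa using h))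
          have h2 : ((k : ℕ) < m + 1) ↔ ((k : ℕ) < m) := by omega
          simp [hD, Matrix.diagonal_apply_eq, h2, (by omega : ((k : ℕ) ≤ m) ↔ ((k : ℕ) < m)),
            Matrix.single_apply_of_row_ne (Ne.symm hki)]
      · simp [hD, Matrix.diagonal_apply_ne _ hkj, Matrix.single]
        intro h1 h2; exact absurd (h1.symm.trans h2) hkj
    have hfin : (A₁ - D * A) * (1 - Matrix.single i i 1 * A)
        = A₁ - (D + Matrix.single i i 1) * A := by
      rw [mul_sub, mul_one, ← mul_assoc, habs, add_mul, sub_sub]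
    rw [hfin, hDsum]

/-- `A₁` (upper triangular part with `1`s on the diagonal) is invertible over
`ℤ`, and the matrix of the Coxeter element `w = s 1 ∘ ⋯ ∘ s n` in the standard basis equals
`-A₁⁻¹ * A₂ = 1 - A₁⁻¹ * A`, where `A₂ = A - A₁`. -/
theorem coxeter_matrix_eq (n : ℕ) (hn : 1 ≤ n) (A : Matrix (Fin n) (Fin n) ℤ)
    (hA : IsGCM A) (A₁ A₂ : Matrix (Fin n) (Fin n) ℤ)
    (hA₁ : ∀ i j, A₁ i j = if i = j then 1 else if i < j then A i j else 0)
    (hA₂ : A₂ = A - A₁) :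
    IsUnit A₁ ∧
      LinearMap.toMatrix' (cox A hA.1).toLinearMap = -(A₁⁻¹ * A₂) ∧
      LinearMap.toMatrix' (cox A hA.1).toLinearMap = 1 - A₁⁻¹ * A := by
  -- A₁ is upper triangular with 1's on the diagonal, so det A₁ = 1
  have hdet : A₁.det = 1 := by
    have hbt : A₁.BlockTriangular (id : Fin n → Fin n) := by
      intro i j hij
      have h1 : i ≠ j := ne_of_gt hij
      have h2 : ¬ i < j := not_lt_of_gt hij
      simp [hA₁, h1, h2]
    rw [Matrix.det_of_upperTriangular hbt]
    have : ∀ i : Fin n, A₁ i i = 1 := fun i => by simp [hA₁]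
    simp [this]
  have hUnit : IsUnit A₁ := by
    rw [Matrix.isUnit_iff_isUnit_det, hdet]; exact isUnit_one
  -- the key identity A₁ * P = A₁ - A
  have hkey : A₁ * LinearMap.toMatrix' (cox A hA.1).toLinearMap = A₁ - A := by
    have hcox : cox A hA.1 = ((List.finRange n).map (s A hA.1)).prod := by
      rw [cox, List.ofFn_eq_map]
    rw [hcox, toMatrix'_listProd]
    have := key_partial A A₁ hA₁ n le_rfl
    rw [List.take_of_length_le (by simp)] at this
    rw [this]
    have hdiag : Matrix.diagonal (fun k : Fin n => if (k : ℕ) < n then (1:ℤ) else 0)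
        = (1 : Matrix (Fin n) (Fin n) ℤ) := by
      have : (fun k : Fin n => if (k : ℕ) < n then (1:ℤ) else 0) = fun _ => 1 := by
        ext k; simp [k.isLt]
      rw [this, Matrix.diagonal_one]
    rw [hdiag, one_mul]
  have hinv : A₁⁻¹ * A₁ = 1 := Matrix.nonsing_inv_mul A₁ (by rw [hdet]; exact isUnit_one)
  have hP : LinearMap.toMatrix' (cox A hA.1).toLinearMap = 1 - A₁⁻¹ * A := by
    calc LinearMap.toMatrix' (cox A hA.1).toLinearMap
        = A₁⁻¹ * (A₁ * LinearMap.toMatrix' (cox A hA.1).toLinearMap) := by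
          rw [← mul_assoc, hinv, one_mul]
      _ = A₁⁻¹ * (A₁ - A) := by rw [hkey]
      _ = 1 - A₁⁻¹ * A := by rw [mul_sub, hinv]
  refine ⟨hUnit, ?_, hP⟩
  rw [hP, hA₂, mul_sub, neg_sub, hinv]

end KacMoodyPaper
end

section
/- For every v ∈ ℤ^n, the Coxeter element w = s 1 ∘ s 2 ∘ ⋯ ∘ s n satisfies w(v) = v if and only if A·v = 0; in other words, the fixed space of the Coxeter element in ℤ^n is exactly the kernel of A. -/
open Matrix Filter Pointwise

namespace KacMoodyPaper

variable {n : ℕ}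

lemma s_apply (A : Matrix (Fin n) (Fin n) ℤ) (h2 : ∀ i, A i i = 2) (i : Fin n)
    (u : Fin n → ℤ) : s A h2 i u = u - (A.mulVec u i) • Pi.single i 1 := rfl

lemma s_invol (A : Matrix (Fin n) (Fin n) ℤ) (h2 : ∀ i, A i i = 2) (i : Fin n)
    (u : Fin n → ℤ) : s A h2 i (s A h2 i u) = u := sMap_involutive A i (h2 i) u

lemma prod_fix (v : Fin n → ℤ) : ∀ l : List ((Fin n → ℤ) ≃ₗ[ℤ] (Fin n → ℤ)),
    (∀ g ∈ l, g v = v) → l.prod v = v := by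
  intro l
  induction l with
  | nil => intro _; rfl
  | cons a l ih =>
    intro h
    have : (a :: l).prod = a * l.prod := List.prod_cons
    rw [this]
    have h3 : (a * l.prod) v = a (l.prod v) := rfl
    rw [h3, ih (fun g hg => h g (List.mem_cons_of_mem a hg)), h a List.mem_cons_self]

/-- the fixed space in `ℤ^n` of the Coxeter element `w = s 1 ∘ ⋯ ∘ s n` is
exactly the kernel of `A`: for every `v ∈ ℤ^n`, `w v = v ↔ A · v = 0`. -/
theorem coxeter_fixed_iff_ker (n : ℕ) (hn : 1 ≤ n) (A : Matrix (Fin n) (Fin n) ℤ)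
    (hA : IsGCM A) (v : Fin n → ℤ) :
    cox A hA.1 v = v ↔ A.mulVec v = 0 := by
  set h2 := hA.1 with hh2
  constructor
  · intro hfix
    set L := List.ofFn (fun i : Fin n => s A h2 i) with hL
    set u : ℕ → (Fin n → ℤ) := fun k => (L.drop k).prod v with hu
    have hlen : L.length = n := by simp [hL]
    have hstep : ∀ k (hk : k < n), u k = s A h2 ⟨k, hk⟩ (u (k + 1)) := by
      intro k hk
      have hdrop : L.drop k = s A h2 ⟨k, hk⟩ :: L.drop (k + 1) := by
        rw [List.drop_eq_getElem_cons (by omega : k < L.length)]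
        congr 1
        simp [hL]
      show (L.drop k).prod v = _
      rw [hdrop, List.prod_cons]
      rfl
    have hcoord : ∀ m k, k + m = n → ∀ j : Fin n, (j : ℕ) < k → u k j = v j := by
      intro m
      induction m with
      | zero =>
        intro k hk j hj
        have : L.drop k = [] := List.drop_eq_nil_of_le (by omega)
        simp [hu, this]
      | succ m ih =>
        intro k hk j hj
        have hk' : k < n := by omega
        have hne : j ≠ (⟨k, hk'⟩ : Fin n) := by
          intro h; rw [h] at hj; simp at hj
        have := hstep k hk'
        rw [this, s_apply]
        simp only [Pi.sub_apply, Pi.smul_apply, Pi.single_eq_of_ne hne, smul_eq_mul,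
          mul_zero, sub_zero]
        exact ih (k + 1) (by omega) j (by omega)
    have main : ∀ k, k ≤ n → u k = v ∧ ∀ j : Fin n, (j : ℕ) < k → A.mulVec v j = 0 := by
      intro k
      induction k with
      | zero =>
        intro _
        refine ⟨?_, fun j hj => absurd hj (by omega)⟩
        have : u 0 = cox A h2 v := by simp [hu, hL, cox]
        rw [this, hfix]
      | succ k ih =>
        intro hk
        have hk' : k < n := by omega
        obtain ⟨huk, hAv⟩ := ih (le_of_lt hk')
        have hrel : u (k + 1) = s A h2 ⟨k, hk'⟩ v := by
          have h1 := hstep k hk'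
          rw [huk] at h1
          have := congrArg (s A h2 ⟨k, hk'⟩) h1
          rw [s_invol] at this
          exact this.symm
        have hck : u (k + 1) ⟨k, hk'⟩ = v ⟨k, hk'⟩ :=
          hcoord (n - (k + 1)) (k + 1) (by omega) ⟨k, hk'⟩ (by simp)
        have hAk : A.mulVec v ⟨k, hk'⟩ = 0 := by
          have := hck
          rw [hrel, s_apply] at this
          simp only [Pi.sub_apply, Pi.smul_apply, Pi.single_eq_same, smul_eq_mul,
            mul_one] at this
          omega
        have hsfix : s A h2 ⟨k, hk'⟩ v = v := by
          rw [s_apply, hAk]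
          simp
        refine ⟨by rw [hrel, hsfix], fun j hj => ?_⟩
        rcases lt_or_eq_of_le (Nat.lt_succ_iff.mp hj) with h | h
        · exact hAv j h
        · have : j = (⟨k, hk'⟩ : Fin n) := Fin.ext h
          rw [this]; exact hAk
    funext j
    exact (main n le_rfl).2 j j.isLt
  · intro hker
    have hfix : ∀ i : Fin n, s A h2 i v = v := by
      intro i
      rw [s_apply]
      have : A.mulVec v i = 0 := congrFun hker i
      simp [this]
    show (List.ofFn (fun i : Fin n => s A h2 i)).prod v = v
    apply prod_fix
    intro g hg
    obtain ⟨i, rfl⟩ := List.mem_ofFn.mp hg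
    exact hfix i

end KacMoodyPaper
end
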